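/- arXiv:1401.1625 — 2 statements merged into one kernel-verified Lean document; each statement's English description precedes it below -/
import Mathlib

section
/- For every positive integer n and real t ≠ 0, the n-th derivative of the function t ↦ e^(-1/t) equals (-1)^n · e^(-1/t) · Σ_{k=1}^{n} (-1)^k · L(n,k) / t^(n+k), where L(n,k) are the Lah numbers. -/
open Finset

/-- Stirling numbers of the second kind. -/
def stirling : ℕ → ℕ → ℕ
  | 0, 0 => 1
  | 0, _ + 1 => 0
  | _ + 1, 0 => 0
  | n + 1, k + 1 => stirling n k + (k + 1) * stirling n (k + 1)

/-- Bell numbers, via the standard binomial recurrence. -/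
def bell : ℕ → ℕ
  | 0 => 1
  | n + 1 => ∑ k ∈ (Finset.range (n + 1)).attach, Nat.choose n k.1 * bell k.1
decreasing_by exact Nat.lt_succ_of_le (Nat.lt_succ_iff.mp (Finset.mem_range.mp k.2))

/-- Lah numbers: L(n,k) = C(n-1,k-1) · n!/k! for k ≥ 1, L(0,0)=1, L(n,0)=0 for n ≥ 1. -/
def lah (n k : ℕ) : ℕ :=
  if k = 0 then (if n = 0 then 1 else 0)
  else (n - 1).choose (k - 1) * Nat.factorial n / Nat.factorial k


lemma lah_zero (n : ℕ) (hn : 1 ≤ n) : lah n 0 = 0 := by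
  simp [lah]; omega

lemma lah_self (n : ℕ) : lah n n = 1 := by
  rcases n with _ | m
  · simp [lah]
  · simp [lah, Nat.div_self (Nat.factorial_pos _)]

lemma lah_eq_zero_of_lt (n k : ℕ) (hn : 1 ≤ n) (h : n < k) : lah n k = 0 := by
  have hk : k ≠ 0 := by omega
  simp [lah, hk, Nat.choose_eq_zero_of_lt (show n - 1 < k - 1 by omega)]

lemma lah_mul_factorial (n k : ℕ) (hk : 1 ≤ k) (hkn : k ≤ n) :
    lah n k * k.factorial = (n - 1).choose (k - 1) * n.factorial := by
  have hd : k.factorial ∣ (n - 1).choose (k - 1) * n.factorial :=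
    Dvd.dvd.mul_left (Nat.factorial_dvd_factorial hkn) _
  simp [lah, show k ≠ 0 by omega, Nat.div_mul_cancel hd]

lemma choose_key (m i : ℕ) :
    (m + 2) * Nat.choose m i + (m + 2) * Nat.choose m (i + 1)
      = (i + 2) * Nat.choose m i + (m + i + 3) * Nat.choose m (i + 1) := by
  rcases le_or_gt i m with h | h
  · obtain ⟨d, rfl⟩ : ∃ d, m = i + d := ⟨m - i, by omega⟩
    have h1 := Nat.choose_succ_right_eq (i + d) i
    simp only [Nat.add_sub_cancel_left] at h1
    nlinarith [h1]
  · simp [Nat.choose_eq_zero_of_lt h, Nat.choose_eq_zero_of_lt (show m < i + 1 from by omega)]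

lemma lah_rec (n j : ℕ) (hn : 1 ≤ n) :
    lah (n + 1) (j + 1) = lah n j + (n + j + 1) * lah n (j + 1) := by
  rcases lt_trichotomy j n with h | h | h
  · -- j < n, so j + 1 ≤ n
    apply Nat.eq_of_mul_eq_mul_right (Nat.factorial_pos (j + 1))
    rw [lah_mul_factorial (n+1) (j+1) (by omega) (by omega), Nat.add_mul,
      Nat.mul_assoc, lah_mul_factorial n (j+1) (by omega) (by omega)]
    rcases Nat.eq_zero_or_pos j with hj | hj
    · subst hj
      rw [lah_zero n hn]
      simp [Nat.factorial_succ]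
      try ring
    · -- j ≥ 1
      have : lah n j * (j + 1).factorial = ((n - 1).choose (j - 1) * n.factorial) * (j + 1) := by
        rw [Nat.factorial_succ, show lah n j * ((j+1) * j.factorial) = (lah n j * j.factorial) * (j+1) by ring,
          lah_mul_factorial n j hj (by omega)]
      rw [this]
      -- goal: C(n,j)*(n+1)! = C(n-1,j-1)*n!*(j+1) + (n+j+1)*(C(n-1,j)*n!)
      obtain ⟨m, rfl⟩ : ∃ m, n = m + 1 := ⟨n - 1, by omega⟩
      obtain ⟨i, rfl⟩ : ∃ i, j = i + 1 := ⟨j - 1, by omega⟩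
      simp only [Nat.add_sub_cancel]
      rw [Nat.factorial_succ (m + 1)]
      have hp : Nat.choose (m + 1) (i + 1) = Nat.choose m i + Nat.choose m (i + 1) :=
        Nat.choose_succ_succ m i
      rw [hp]
      have := choose_key m i
      nlinarith [this, Nat.factorial_pos (m+1)]
  · subst h
    rw [lah_self, lah_self, lah_eq_zero_of_lt j (j+1) hn (by omega)]
    simp
  · rw [lah_eq_zero_of_lt (n+1) (j+1) (by omega) (by omega),
      lah_eq_zero_of_lt n j hn h, lah_eq_zero_of_lt n (j+1) hn (by omega)]
    simp

lemma hasDerivAt_E (t : ℝ) (ht : t ≠ 0) :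
    HasDerivAt (fun s : ℝ => Real.exp (-(1 / s))) (Real.exp (-(1 / t)) * (t ^ 2)⁻¹) t := by
  have h1 : HasDerivAt (fun s : ℝ => -(1 / s)) ((t ^ 2)⁻¹) t := by
    simpa [one_div] using (hasDerivAt_inv ht).fun_neg
  simpa using h1.exp

lemma aux (n : ℕ) (hn : 1 ≤ n) : ∀ t : ℝ, t ≠ 0 →
    iteratedDeriv n (fun t : ℝ => Real.exp (-(1 / t))) t =
      (-1 : ℝ) ^ n * Real.exp (-(1 / t)) *
        ∑ k ∈ Finset.Icc 1 n, (-1 : ℝ) ^ k * (lah n k : ℝ) * t ^ (-((n + k : ℕ) : ℤ)) := by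
  induction n, hn using Nat.le_induction with
  | base =>
    intro t ht
    rw [iteratedDeriv_one, (hasDerivAt_E t ht).deriv]
    have : lah 1 1 = 1 := rfl
    rw [Finset.Icc_self, Finset.sum_singleton, this]
    push_cast
    rw [show ((-2:ℤ)) = -((2:ℕ):ℤ) by norm_num, zpow_neg, zpow_natCast]
    ring
  | succ n hn ih =>
    intro t ht
    -- derivative of the closed form
    set E := fun s : ℝ => Real.exp (-(1 / s)) with hEdef
    have hS : HasDerivAt
        (fun s : ℝ => ∑ k ∈ Finset.Icc 1 n, (-1 : ℝ) ^ k * (lah n k : ℝ) * s ^ (-((n + k : ℕ) : ℤ)))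
        (∑ k ∈ Finset.Icc 1 n, (-1 : ℝ) ^ k * (lah n k : ℝ) *
          ((Int.cast (-((n + k : ℕ) : ℤ)) : ℝ) * t ^ (-((n + k : ℕ) : ℤ) - 1))) t := by
      apply HasDerivAt.fun_sum
      intro k hk
      exact (hasDerivAt_zpow (-((n + k : ℕ) : ℤ)) t (Or.inl ht)).const_mul _
    have hg : HasDerivAt
        (fun s : ℝ => (-1 : ℝ) ^ n * (E s *
          ∑ k ∈ Finset.Icc 1 n, (-1 : ℝ) ^ k * (lah n k : ℝ) * s ^ (-((n + k : ℕ) : ℤ))))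
        ((-1 : ℝ) ^ n * ((E t * (t ^ 2)⁻¹) *
            (∑ k ∈ Finset.Icc 1 n, (-1 : ℝ) ^ k * (lah n k : ℝ) * t ^ (-((n + k : ℕ) : ℤ)))
          + E t * ∑ k ∈ Finset.Icc 1 n, (-1 : ℝ) ^ k * (lah n k : ℝ) *
              ((Int.cast (-((n + k : ℕ) : ℤ)) : ℝ) * t ^ (-((n + k : ℕ) : ℤ) - 1)))) t :=
      ((hasDerivAt_E t ht).mul hS).const_mul _
    have hev : iteratedDeriv n (fun t : ℝ => Real.exp (-(1 / t))) =ᶠ[nhds t]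
        (fun s : ℝ => (-1 : ℝ) ^ n * (E s *
          ∑ k ∈ Finset.Icc 1 n, (-1 : ℝ) ^ k * (lah n k : ℝ) * s ^ (-((n + k : ℕ) : ℤ)))) := by
      filter_upwards [compl_singleton_mem_nhds ht] with s hs
      rw [ih s hs]
      ring
    rw [iteratedDeriv_succ, hev.deriv_eq, hg.deriv]
    -- now pure algebra
    have hsum : ∑ k ∈ Finset.Icc 1 (n + 1), (-1 : ℝ) ^ k * (lah (n + 1) k : ℝ) *
          t ^ (-((n + 1 + k : ℕ) : ℤ))
        = -(t ^ (-2 : ℤ) * ∑ k ∈ Finset.Icc 1 n, (-1 : ℝ) ^ k * (lah n k : ℝ) *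
              t ^ (-((n + k : ℕ) : ℤ)))
          - ∑ k ∈ Finset.Icc 1 n, (-1 : ℝ) ^ k * (lah n k : ℝ) *
              ((Int.cast (-((n + k : ℕ) : ℤ)) : ℝ) * t ^ (-((n + k : ℕ) : ℤ) - 1)) := by
      rw [show Finset.Icc 1 (n + 1) = Finset.Ico 1 (n + 2) from (Finset.Ico_add_one_right_eq_Icc ..).symm,
        show Finset.Icc 1 n = Finset.Ico 1 (n + 1) from (Finset.Ico_add_one_right_eq_Icc ..).symm,
        Finset.sum_Ico_eq_sum_range, Finset.sum_Ico_eq_sum_range, Finset.sum_Ico_eq_sum_range]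
      simp only [Nat.add_sub_cancel, show n + 2 - 1 = n + 1 from rfl]
      have hsplit : ∀ i ∈ Finset.range (n + 1),
          (-1 : ℝ) ^ (1 + i) * (lah (n + 1) (1 + i) : ℝ) * t ^ (-((n + 1 + (1 + i) : ℕ) : ℤ))
          = (-1 : ℝ) ^ (1 + i) * (lah n i : ℝ) * t ^ (-((n + 1 + (1 + i) : ℕ) : ℤ))
            + (-1 : ℝ) ^ (1 + i) * (((n + i + 1 : ℕ) : ℝ) * (lah n (i + 1) : ℝ)) *
                t ^ (-((n + 1 + (1 + i) : ℕ) : ℤ)) := by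
        intro i hi
        rw [show 1 + i = i + 1 from Nat.add_comm 1 i, lah_rec n i hn]
        push_cast
        ring
      rw [Finset.sum_congr rfl hsplit, Finset.sum_add_distrib, Finset.sum_range_succ',
        Finset.sum_range_succ]
      rw [lah_zero n hn, lah_eq_zero_of_lt n (n + 1) hn (by omega)]
      simp only [Nat.cast_zero, mul_zero, zero_mul, add_zero, mul_zero, zero_mul, add_zero]
      rw [Finset.mul_sum, ← Finset.sum_neg_distrib, ← Finset.sum_sub_distrib,
        ← Finset.sum_add_distrib]
      apply Finset.sum_congr rfl
      intro i hi
      simp only [zpow_neg, zpow_natCast, zpow_sub₀ ht, zpow_one, zpow_two]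
      push_cast
      field_simp
      ring
    rw [hsum]
    have h2 : (t ^ 2)⁻¹ = t ^ (-2 : ℤ) := by
      rw [← zpow_natCast t 2, ← zpow_neg]
      norm_num
    rw [h2]
    ring

theorem iteratedDeriv_exp_neg_one_div (n : ℕ) (hn : 1 ≤ n) (t : ℝ) (ht : t ≠ 0) :
    iteratedDeriv n (fun t : ℝ => Real.exp (-(1 / t))) t =
      (-1 : ℝ) ^ n * Real.exp (-(1 / t)) *
        ∑ k ∈ Finset.Icc 1 n, (-1 : ℝ) ^ k * (lah n k : ℝ) / t ^ (n + k) := by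
  rw [aux n hn t ht]
  congr 1
  apply Finset.sum_congr rfl
  intro k hk
  rw [div_eq_mul_inv, ← zpow_natCast t (n + k), ← zpow_neg]
end

section
/- For every positive integer n, the identity Σ_{k=1}^{n} (-1)^(n-k) · (Σ_{ℓ=1}^{k} L(k,ℓ)) · S(n,k) = Σ_{k=1}^{n} S(n,k) holds, where L(k,ℓ) = C(k-1,ℓ-1)·k!/ℓ! are Lah numbers and S(n,k) are Stirling numbers of the second kind. -/
open Finset

def stirling1 : ℕ → ℕ → ℕ
  | 0, 0 => 1
  | 0, _ + 1 => 0
  | _ + 1, 0 => 0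
  | n + 1, k + 1 => stirling1 n k + n * stirling1 n (k + 1)

def lahRec : ℕ → ℕ → ℕ
  | 0, 0 => 1
  | 0, _ + 1 => 0
  | _ + 1, 0 => 0
  | n + 1, k + 1 => lahRec n k + (n + k + 1) * lahRec n (k + 1)

lemma stirling_eq_zero_of_lt : ∀ {n k : ℕ}, n < k → stirling n k = 0
  | 0, _ + 1, _ => rfl
  | n + 1, k + 1, h => by
    have h1 : n < k := Nat.lt_of_succ_lt_succ h
    have h2 : n < k + 1 := Nat.lt_succ_of_lt h1
    simp [stirling, stirling_eq_zero_of_lt h1, stirling_eq_zero_of_lt h2]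

lemma stirling1_eq_zero_of_lt : ∀ {n k : ℕ}, n < k → stirling1 n k = 0
  | 0, _ + 1, _ => rfl
  | n + 1, k + 1, h => by
    have h1 : n < k := Nat.lt_of_succ_lt_succ h
    have h2 : n < k + 1 := Nat.lt_succ_of_lt h1
    simp [stirling1, stirling1_eq_zero_of_lt h1, stirling1_eq_zero_of_lt h2]

lemma lahRec_eq_zero_of_lt : ∀ {n k : ℕ}, n < k → lahRec n k = 0
  | 0, _ + 1, _ => rfl
  | n + 1, k + 1, h => by
    have h1 : n < k := Nat.lt_of_succ_lt_succ h
    have h2 : n < k + 1 := Nat.lt_succ_of_lt h1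
    simp [lahRec, lahRec_eq_zero_of_lt h1, lahRec_eq_zero_of_lt h2]

lemma lahRec_succ_succ (n k : ℕ) :
    lahRec (n+1) (k+1) = lahRec n k + (n + k + 1) * lahRec n (k+1) := rfl

lemma lahRec_mul_factorial (n : ℕ) : ∀ k,
    lahRec (n+1) (k+1) * (k+1).factorial = n.choose k * (n+1).factorial := by
  induction n with
  | zero =>
    intro k
    cases k with
    | zero => decide
    | succ k =>
      simp [lahRec_eq_zero_of_lt (by omega : (1:ℕ) < k + 2),
        Nat.choose_eq_zero_of_lt (by omega : (0:ℕ) < k + 1)]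
  | succ n ih =>
    intro k
    cases k with
    | zero =>
      have h' : lahRec (n+1) 1 = (n+1).factorial := by simpa using ih 0
      have h0 : lahRec (n+1) 0 = 0 := rfl
      rw [lahRec_succ_succ, h0, h']
      simp [Nat.factorial_succ]
    | succ k =>
      by_cases hk : k ≤ n
      · have key : (k+2) * (n.choose k) + (n+k+3) * (n.choose (k+1))
            = (n+1).choose (k+1) * (n+2) := by
          have h1 : n.choose (k+1) * (k+1) = n.choose k * (n-k) :=
            Nat.choose_succ_right_eq n k
          have h2 : (n+1).choose (k+1) = n.choose k + n.choose (k+1) :=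
            Nat.choose_succ_succ n k
          calc (k+2) * (n.choose k) + (n+k+3) * (n.choose (k+1))
              = (k+2) * (n.choose k) + (n+2) * (n.choose (k+1))
                  + n.choose (k+1) * (k+1) := by ring
            _ = (k+2) * (n.choose k) + (n+2) * (n.choose (k+1))
                  + n.choose k * (n-k) := by rw [h1]
            _ = ((k+2) + (n-k)) * (n.choose k) + (n+2) * (n.choose (k+1)) := by ring
            _ = (n+2) * (n.choose k) + (n+2) * (n.choose (k+1)) := by
                  rw [show k+2+(n-k) = n+2 by omega]
            _ = (n+1).choose (k+1) * (n+2) := by rw [h2]; ring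
        calc lahRec (n+2) (k+2) * (k+2).factorial
            = (k+2) * (lahRec (n+1) (k+1) * (k+1).factorial)
                + (n+k+3) * (lahRec (n+1) (k+2) * (k+2).factorial) := by
              rw [lahRec_succ_succ, Nat.factorial_succ (k+1)]; ring
          _ = (k+2) * (n.choose k * (n+1).factorial)
                + (n+k+3) * (n.choose (k+1) * (n+1).factorial) := by
              rw [ih k, ih (k+1)]
          _ = ((k+2) * (n.choose k) + (n+k+3) * (n.choose (k+1))) * (n+1).factorial := by
              ring
          _ = (n+1).choose (k+1) * (n+2) * (n+1).factorial := by rw [key]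
          _ = (n+1).choose (k+1) * (n+2).factorial := by rw [Nat.factorial_succ (n+1)]; ring
      · rw [lahRec_eq_zero_of_lt (by omega : n+2 < k+2),
          Nat.choose_eq_zero_of_lt (by omega : n+1 < k+1)]
        simp

lemma lah_succ_succ (n k : ℕ) : lah (n+1) (k+1) = lahRec (n+1) (k+1) := by
  unfold lah
  simp only [Nat.succ_ne_zero, if_false, Nat.add_sub_cancel]
  rw [← lahRec_mul_factorial n k, Nat.mul_div_cancel _ (Nat.factorial_pos (k+1))]

lemma stirling_succ_succ (n k : ℕ) :
    stirling (n+1) (k+1) = stirling n k + (k+1) * stirling n (k+1) := rfl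

lemma stirling_binom (n : ℕ) : ∀ k,
    stirling (n+1) (k+1) = ∑ j ∈ Finset.range (n+1), n.choose j * stirling j k := by
  induction n with
  | zero => intro k; cases k <;> simp [stirling]
  | succ n ih =>
    intro k
    have peel : ∑ j ∈ Finset.range (n+2), (n+1).choose j * stirling j k
        = (∑ j ∈ Finset.range (n+1), (n+1).choose (j+1) * stirling (j+1) k)
          + stirling 0 k := by
      rw [Finset.sum_range_succ']; simp
    have h2 : (∑ j ∈ Finset.range (n+1), n.choose (j+1) * stirling (j+1) k)
        + stirling 0 k = stirling (n+1) (k+1) := by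
      have : (∑ j ∈ Finset.range (n+1), n.choose (j+1) * stirling (j+1) k)
          + stirling 0 k = ∑ j ∈ Finset.range (n+2), n.choose j * stirling j k := by
        conv_rhs => rw [Finset.sum_range_succ']
        simp
      rw [this, Finset.sum_range_succ, Nat.choose_succ_self, ih k]
      simp
    have split : (∑ j ∈ Finset.range (n+1), (n+1).choose (j+1) * stirling (j+1) k)
        = (∑ j ∈ Finset.range (n+1), n.choose j * stirling (j+1) k)
          + ∑ j ∈ Finset.range (n+1), n.choose (j+1) * stirling (j+1) k := by
      rw [← Finset.sum_add_distrib]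
      refine Finset.sum_congr rfl fun j _ => ?_
      rw [Nat.choose_succ_succ]; ring
    rw [peel, split]
    cases k with
    | zero =>
      have hz : ∀ j, j ∈ Finset.range (n+1) → n.choose j * stirling (j+1) 0 = 0 :=
        fun j _ => by simp [show stirling (j+1) 0 = 0 from rfl]
      rw [Finset.sum_eq_zero hz]
      rw [show (0:ℕ) + (∑ j ∈ Finset.range (n+1), n.choose (j+1) * stirling (j+1) 0)
          + stirling 0 0 = stirling (n+1) (0+1) by rw [zero_add, h2]]
      rw [stirling_succ_succ (n+1) 0]
      simp [show stirling (n+1) 0 = 0 from rfl]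
    | succ k =>
      have e1 : (∑ j ∈ Finset.range (n+1), n.choose j * stirling (j+1) (k+1))
          = stirling (n+1) (k+1) + (k+1) * stirling (n+1) (k+2) := by
        rw [ih k, ih (k+1), Finset.mul_sum, ← Finset.sum_add_distrib]
        refine Finset.sum_congr rfl fun j _ => ?_
        rw [stirling_succ_succ]; ring
      conv_rhs => rw [add_assoc]
      rw [h2, e1, stirling_succ_succ (n+1) (k+1)]
      ring

lemma bell_succ (n : ℕ) : bell (n+1) = ∑ j ∈ Finset.range (n+1), n.choose j * bell j := by
  rw [bell]
  exact Finset.sum_attach _ fun j => n.choose j * bell j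

lemma bell_eq_sum : ∀ n, bell n = ∑ k ∈ Finset.range (n+1), stirling n k := by
  intro n
  induction n using Nat.strong_induction_on with
  | _ n ih =>
    match n with
    | 0 => simp [bell, stirling]
    | n+1 =>
      rw [bell_succ]
      have h1 : ∀ j ∈ Finset.range (n+1), n.choose j * bell j
          = ∑ k ∈ Finset.range (n+1), n.choose j * stirling j k := by
        intro j hj
        have hj' : j < n+1 := Finset.mem_range.mp hj
        rw [ih j hj', Finset.mul_sum]
        apply Finset.sum_subset (Finset.range_subset_range.2 hj')
        intro x hx hxn
        simp only [Finset.mem_range, not_lt] at hxn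
        rw [stirling_eq_zero_of_lt (by omega : j < x), mul_zero]
      rw [Finset.sum_congr rfl h1, Finset.sum_comm]
      conv_rhs => rw [Finset.sum_range_succ']
      simp only [show stirling (n+1) 0 = 0 from rfl, add_zero]
      exact Finset.sum_congr rfl fun k _ => (stirling_binom n k).symm

lemma stirling1_succ_succ (n k : ℕ) :
    stirling1 (n+1) (k+1) = stirling1 n k + n * stirling1 n (k+1) := rfl

lemma lahRec_eq_sum (n : ℕ) : ∀ m,
    (∑ j ∈ Finset.range (n+1), stirling1 n j * stirling j m) = lahRec n m := by
  induction n with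
  | zero => intro m; cases m <;> simp [stirling1, stirling, lahRec]
  | succ n ih =>
    intro m
    have peel : ∑ j ∈ Finset.range (n+2), stirling1 (n+1) j * stirling j m
        = ∑ j ∈ Finset.range (n+1), stirling1 (n+1) (j+1) * stirling (j+1) m := by
      rw [Finset.sum_range_succ']
      simp [show stirling1 (n+1) 0 = 0 from rfl]
    have split : ∑ j ∈ Finset.range (n+1), stirling1 (n+1) (j+1) * stirling (j+1) m
        = (∑ j ∈ Finset.range (n+1), stirling1 n j * stirling (j+1) m)
          + n * ∑ j ∈ Finset.range (n+1), stirling1 n (j+1) * stirling (j+1) m := by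
      rw [Finset.mul_sum, ← Finset.sum_add_distrib]
      refine Finset.sum_congr rfl fun j _ => ?_
      rw [stirling1_succ_succ]; ring
    have second : n * (∑ j ∈ Finset.range (n+1), stirling1 n (j+1) * stirling (j+1) m)
        = n * lahRec n m := by
      have hr : ∑ j ∈ Finset.range (n+2), stirling1 n j * stirling j m
          = (∑ j ∈ Finset.range (n+1), stirling1 n (j+1) * stirling (j+1) m)
            + stirling1 n 0 * stirling 0 m := Finset.sum_range_succ' _ _
      have htop : ∑ j ∈ Finset.range (n+2), stirling1 n j * stirling j m
          = lahRec n m := by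
        rw [Finset.sum_range_succ, stirling1_eq_zero_of_lt (Nat.lt_succ_self n),
          zero_mul, add_zero, ih]
      have hz : n * (stirling1 n 0 * stirling 0 m) = 0 := by
        cases n with
        | zero => simp
        | succ n => simp [show stirling1 (n+1) 0 = 0 from rfl]
      calc n * (∑ j ∈ Finset.range (n+1), stirling1 n (j+1) * stirling (j+1) m)
          = n * ((∑ j ∈ Finset.range (n+1), stirling1 n (j+1) * stirling (j+1) m)
              + stirling1 n 0 * stirling 0 m) := by rw [mul_add, hz, add_zero]
        _ = n * lahRec n m := by rw [← hr, htop]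
    rw [peel, split, second]
    cases m with
    | zero =>
      have hz : ∀ j ∈ Finset.range (n+1), stirling1 n j * stirling (j+1) 0 = 0 :=
        fun j _ => by simp [show stirling (j+1) 0 = 0 from rfl]
      rw [Finset.sum_eq_zero hz, zero_add]
      show n * lahRec n 0 = lahRec (n+1) 0
      cases n with
      | zero => rfl
      | succ n => simp [show lahRec (n+1) 0 = 0 from rfl, show lahRec (n+2) 0 = 0 from rfl]
    | succ m =>
      have first : ∑ j ∈ Finset.range (n+1), stirling1 n j * stirling (j+1) (m+1)
          = lahRec n m + (m+1) * lahRec n (m+1) := by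
        rw [← ih m, ← ih (m+1), Finset.mul_sum, ← Finset.sum_add_distrib]
        refine Finset.sum_congr rfl fun j _ => ?_
        rw [stirling_succ_succ]; ring
      rw [first, lahRec_succ_succ]
      ring

lemma inversion (n : ℕ) : ∀ m,
    (∑ k ∈ Finset.range (n+1), (-1:ℤ)^k * stirling n k * stirling1 k m)
      = if m = n then (-1:ℤ)^n else 0 := by
  induction n with
  | zero =>
    intro m
    cases m with
    | zero => simp [stirling, stirling1]
    | succ m => simp [stirling, show stirling1 0 (m+1) = 0 from rfl]
  | succ n ih =>
    intro m
    have peel : (∑ k ∈ Finset.range (n+2), (-1:ℤ)^k * stirling (n+1) k * stirling1 k m)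
        = ∑ k ∈ Finset.range (n+1),
            (-1:ℤ)^(k+1) * stirling (n+1) (k+1) * stirling1 (k+1) m := by
      rw [Finset.sum_range_succ']
      simp [show stirling (n+1) 0 = 0 from rfl]
    have etop : (∑ k ∈ Finset.range (n+2), (-1:ℤ)^k * k * stirling n k * stirling1 k m)
        = ∑ k ∈ Finset.range (n+1), (-1:ℤ)^k * k * stirling n k * stirling1 k m := by
      rw [Finset.sum_range_succ, stirling_eq_zero_of_lt (Nat.lt_succ_self n)]
      simp
    have hD : (∑ k ∈ Finset.range (n+1),
          (-1:ℤ)^k * (k+1) * stirling n (k+1) * stirling1 (k+1) m)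
        = -∑ k ∈ Finset.range (n+1), (-1:ℤ)^k * k * stirling n k * stirling1 k m := by
      have e : (∑ k ∈ Finset.range (n+2), (-1:ℤ)^k * k * stirling n k * stirling1 k m)
          = ∑ k ∈ Finset.range (n+1),
              (-1:ℤ)^(k+1) * (k+1) * stirling n (k+1) * stirling1 (k+1) m := by
        rw [Finset.sum_range_succ']
        simp
      calc (∑ k ∈ Finset.range (n+1),
              (-1:ℤ)^k * (k+1) * stirling n (k+1) * stirling1 (k+1) m)
          = -∑ k ∈ Finset.range (n+1),
              (-1:ℤ)^(k+1) * (k+1) * stirling n (k+1) * stirling1 (k+1) m := by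
            rw [← Finset.sum_neg_distrib]
            refine Finset.sum_congr rfl fun k _ => ?_
            rw [pow_succ]; ring
        _ = -∑ k ∈ Finset.range (n+2), (-1:ℤ)^k * k * stirling n k * stirling1 k m := by
            rw [e]
        _ = -∑ k ∈ Finset.range (n+1), (-1:ℤ)^k * k * stirling n k * stirling1 k m := by
            rw [etop]
    have main : (∑ k ∈ Finset.range (n+1),
          (-1:ℤ)^(k+1) * stirling (n+1) (k+1) * stirling1 (k+1) m)
        = -(∑ k ∈ Finset.range (n+1), (-1:ℤ)^k * stirling n k * stirling1 (k+1) m)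
          - ∑ k ∈ Finset.range (n+1),
              (-1:ℤ)^k * (k+1) * stirling n (k+1) * stirling1 (k+1) m := by
      rw [← Finset.sum_neg_distrib, ← Finset.sum_sub_distrib]
      refine Finset.sum_congr rfl fun k _ => ?_
      rw [stirling_succ_succ, pow_succ]
      push_cast
      ring
    rw [peel, main, hD]
    cases m with
    | zero =>
      have hA : (∑ k ∈ Finset.range (n+1), (-1:ℤ)^k * stirling n k * stirling1 (k+1) 0) = 0 :=
        Finset.sum_eq_zero fun k _ => by
          simp [show stirling1 (k+1) 0 = 0 from rfl]
      have hDz : (∑ k ∈ Finset.range (n+1), (-1:ℤ)^k * k * stirling n k * stirling1 k 0) = 0 :=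
        Finset.sum_eq_zero fun k _ => by
          cases k with
          | zero => simp
          | succ k => simp [show stirling1 (k+1) 0 = 0 from rfl]
      rw [hA, hDz]
      simp
    | succ m =>
      have hsplit : (∑ k ∈ Finset.range (n+1), (-1:ℤ)^k * stirling n k * stirling1 (k+1) (m+1))
          = (∑ k ∈ Finset.range (n+1), (-1:ℤ)^k * stirling n k * stirling1 k m)
            + ∑ k ∈ Finset.range (n+1), (-1:ℤ)^k * k * stirling n k * stirling1 k (m+1) := by
        rw [← Finset.sum_add_distrib]
        refine Finset.sum_congr rfl fun k _ => ?_
        rw [stirling1_succ_succ]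
        push_cast
        ring
      rw [hsplit, ih m]
      by_cases h : m = n
      · simp [h, pow_succ]
      · simp [h, fun hh : m + 1 = n + 1 => h (Nat.succ_injective hh)]

lemma sum_Icc_eq_range {M : Type*} [AddCommMonoid M] (f : ℕ → M) (n : ℕ) (h0 : f 0 = 0) :
    ∑ k ∈ Finset.Icc 1 n, f k = ∑ k ∈ Finset.range (n+1), f k := by
  apply Finset.sum_subset
  · intro x hx
    simp only [Finset.mem_Icc] at hx
    simp only [Finset.mem_range]
    omega
  · intro x hx hnx
    simp only [Finset.mem_range] at hx
    simp only [Finset.mem_Icc] at hnx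
    have : x = 0 := by omega
    rw [this, h0]

lemma inner_nat (n k : ℕ) (hk1 : 1 ≤ k) (hkn : k ≤ n) :
    (∑ ℓ ∈ Finset.Icc 1 k, lah k ℓ) = ∑ j ∈ Finset.range (n+1), stirling1 k j * bell j := by
  obtain ⟨k, rfl⟩ : ∃ m, k = m + 1 := ⟨k - 1, by omega⟩
  have h1 : ∀ ℓ ∈ Finset.Icc 1 (k+1), lah (k+1) ℓ = lahRec (k+1) ℓ := by
    intro ℓ hℓ
    simp only [Finset.mem_Icc] at hℓ
    obtain ⟨ℓ, rfl⟩ : ∃ m, ℓ = m + 1 := ⟨ℓ - 1, by omega⟩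
    exact lah_succ_succ k ℓ
  rw [Finset.sum_congr rfl h1,
    sum_Icc_eq_range (fun ℓ => lahRec (k+1) ℓ) (k+1) rfl,
    Finset.sum_congr rfl (fun ℓ (_ : ℓ ∈ Finset.range (k+2)) => (lahRec_eq_sum (k+1) ℓ).symm),
    Finset.sum_comm]
  have h2 : ∀ j ∈ Finset.range (k+2),
      (∑ ℓ ∈ Finset.range (k+2), stirling1 (k+1) j * stirling j ℓ)
        = stirling1 (k+1) j * bell j := by
    intro j hj
    simp only [Finset.mem_range] at hj
    rw [← Finset.mul_sum]
    congr 1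
    rw [bell_eq_sum j]
    symm
    apply Finset.sum_subset (Finset.range_subset_range.2 (by omega))
    intro x _ hxn
    simp only [Finset.mem_range, not_lt] at hxn
    exact stirling_eq_zero_of_lt (by omega)
  rw [Finset.sum_congr rfl h2]
  apply Finset.sum_subset (Finset.range_subset_range.2 (by omega))
  intro x _ hxn
  simp only [Finset.mem_range, not_lt] at hxn
  rw [stirling1_eq_zero_of_lt (by omega), zero_mul]

lemma inner_int (n k : ℕ) (hk1 : 1 ≤ k) (hkn : k ≤ n) :
    (∑ ℓ ∈ Finset.Icc 1 k, (lah k ℓ : ℤ))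
      = ∑ j ∈ Finset.range (n+1), (stirling1 k j : ℤ) * (bell j : ℤ) := by
  exact_mod_cast congrArg (Nat.cast : ℕ → ℤ) (inner_nat n k hk1 hkn)

theorem alternating_lah_stirling_sum (n : ℕ) (hn : 1 ≤ n) :
    (∑ k ∈ Finset.Icc 1 n,
        (-1 : ℤ) ^ (n - k) * (∑ ℓ ∈ Finset.Icc 1 k, (lah k ℓ : ℤ)) * stirling n k) =
      ∑ k ∈ Finset.Icc 1 n, (stirling n k : ℤ) := by
  obtain ⟨m, rfl⟩ : ∃ m, n = m + 1 := ⟨n - 1, by omega⟩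
  have hs0 : stirling (m+1) 0 = 0 := rfl
  have hR : (∑ k ∈ Finset.Icc 1 (m+1), (stirling (m+1) k : ℤ)) = (bell (m+1) : ℤ) := by
    rw [sum_Icc_eq_range (fun k => (stirling (m+1) k : ℤ)) (m+1) (by simp [hs0])]
    rw [bell_eq_sum (m+1)]
    push_cast
    rfl
  rw [hR]
  calc (∑ k ∈ Finset.Icc 1 (m+1),
        (-1 : ℤ) ^ (m+1-k) * (∑ ℓ ∈ Finset.Icc 1 k, (lah k ℓ : ℤ)) * stirling (m+1) k)
      = ∑ k ∈ Finset.Icc 1 (m+1), ∑ j ∈ Finset.range (m+2),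
          (bell j : ℤ) * ((-1)^(m+1) * ((-1)^k * stirling (m+1) k * stirling1 k j)) := by
        refine Finset.sum_congr rfl fun k hk => ?_
        simp only [Finset.mem_Icc] at hk
        rw [inner_int (m+1) k hk.1 hk.2]
        have hsign : (-1:ℤ)^(m+1-k) = (-1)^(m+1) * (-1)^k := by
          have h1 : (-1:ℤ)^(m+1) = (-1)^(m+1-k) * (-1)^k := by
            rw [← pow_add, Nat.sub_add_cancel hk.2]
          rw [h1, mul_assoc, ← mul_pow]
          norm_num
        rw [hsign, Finset.mul_sum, Finset.sum_mul]
        refine Finset.sum_congr rfl fun j _ => ?_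
        ring
    _ = ∑ j ∈ Finset.range (m+2), (bell j : ℤ) *
          ((-1)^(m+1) * ∑ k ∈ Finset.Icc 1 (m+1),
            (-1:ℤ)^k * stirling (m+1) k * stirling1 k j) := by
        rw [Finset.sum_comm]
        refine Finset.sum_congr rfl fun j _ => ?_
        rw [Finset.mul_sum, Finset.mul_sum]
    _ = ∑ j ∈ Finset.range (m+2), (bell j : ℤ) *
          ((-1)^(m+1) * (if j = m+1 then (-1:ℤ)^(m+1) else 0)) := by
        refine Finset.sum_congr rfl fun j _ => ?_
        rw [sum_Icc_eq_range (fun k => (-1:ℤ)^k * stirling (m+1) k * stirling1 k j) (m+1)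
          (by simp [hs0]), inversion (m+1) j]
    _ = (bell (m+1) : ℤ) := by
        rw [Finset.sum_eq_single (m+1)]
        · simp [← mul_pow]
        · intro j _ hj
          simp [hj]
        · intro h
          exact absurd (Finset.self_mem_range_succ (m+1)) h
end
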